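/- Let A ⊆ B be commutative semirings, S = A[x₁,…,xₙ], and ρ a prime congruence on B. For T₁, T₂ ⊆ S × S, define Z_ρ(T)(B) = {P ∈ Bⁿ : (f(P), g(P)) ∈ ρ for all (f,g) ∈ T}. Then Z_ρ(T₁)(B) ∪ Z_ρ(T₂)(B) = Z_ρ(T₁ ∗ T₂)(B), where T₁ ∗ T₂ = {(f₁,g₁) ∗ (f₂,g₂) : (f₁,g₁) ∈ T₁, (f₂,g₂) ∈ T₂} with (f₁,g₁) ∗ (f₂,g₂) = (f₁f₂ + g₁g₂, f₁g₂ + f₂g₁). Consequently arbitrary intersections and finite unions of ρ-algebraic varieties are ρ-algebraic varieties, and ∅ and Bⁿ are ρ-algebraic varieties, so the ρ-algebraic varieties form the closed sets of a topology on Bⁿ. -/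
import Mathlib


/-- The twisted product on `S × S`. -/
def tmul {S : Type*} [CommSemiring S] (p q : S × S) : S × S :=
  (p.1 * q.1 + p.2 * q.2, p.1 * q.2 + p.2 * q.1)

/-- `ρ` is a congruence on the commutative semiring `B`. -/
def IsCong {B : Type*} [CommSemiring B] (ρ : Set (B × B)) : Prop :=
  (∀ a : B, (a, a) ∈ ρ) ∧
  (∀ a b : B, (a, b) ∈ ρ → (b, a) ∈ ρ) ∧
  (∀ a b c : B, (a, b) ∈ ρ → (b, c) ∈ ρ → (a, c) ∈ ρ) ∧
  (∀ a b c d : B, (a, b) ∈ ρ → (c, d) ∈ ρ → (a + c, b + d) ∈ ρ) ∧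
  (∀ a b c d : B, (a, b) ∈ ρ → (c, d) ∈ ρ → (a * c, b * d) ∈ ρ)

/-- Evaluation of a polynomial over the subsemiring `A ⊆ B` at a point of `Bⁿ`. -/
noncomputable def evalAt {B : Type*} [CommSemiring B] (A : Subsemiring B) {n : ℕ}
    (P : Fin n → B) (f : MvPolynomial (Fin n) A) : B :=
  MvPolynomial.eval₂ A.subtype P f

/-- The `ρ`-zero set of `T ⊆ S × S` in `Bⁿ`, where `S = A[x₁,…,xₙ]`. -/
def Zset {B : Type*} [CommSemiring B] (A : Subsemiring B) {n : ℕ} (ρ : Set (B × B))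
    (T : Set (MvPolynomial (Fin n) A × MvPolynomial (Fin n) A)) : Set (Fin n → B) :=
  {P | ∀ fg ∈ T, (evalAt A P fg.1, evalAt A P fg.2) ∈ ρ}

lemma zUnion_aux {B : Type*} [CommSemiring B] (A : Subsemiring B) {n : ℕ} (ρ : Set (B × B))
    {κ : Sort*} (T : κ → Set (MvPolynomial (Fin n) A × MvPolynomial (Fin n) A)) :
    (⋂ i, Zset A ρ (T i)) = Zset A ρ (⋃ i, T i) := by
  ext P
  simp only [Set.mem_iInter, Zset, Set.mem_setOf_eq, Set.mem_iUnion]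
  constructor
  · rintro h fg ⟨i, hi⟩; exact h i fg hi
  · intro h i fg hi; exact h fg ⟨i, hi⟩

/-- For a prime congruence `ρ` on `B`: `Z_ρ(T₁) ∪ Z_ρ(T₂) = Z_ρ(T₁ ∗ T₂)`, arbitrary
intersections of `ρ`-algebraic varieties are varieties, `∅` and `Bⁿ` are varieties,
and the `ρ`-algebraic varieties are the closed sets of a topology on `Bⁿ`. -/
theorem zariski_topology_on_affine_space {B : Type*} [CommSemiring B] (A : Subsemiring B)
    (n : ℕ) (ρ : Set (B × B)) (hρ : IsCong ρ) (hproper : ρ ≠ Set.univ)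
    (hprime : ∀ p q : B × B, tmul p q ∈ ρ → p ∈ ρ ∨ q ∈ ρ) :
    (∀ T₁ T₂ : Set (MvPolynomial (Fin n) A × MvPolynomial (Fin n) A),
      Zset A ρ T₁ ∪ Zset A ρ T₂ =
        Zset A ρ {r | ∃ p ∈ T₁, ∃ q ∈ T₂, r = tmul p q}) ∧
    (∀ (ι : Type) (T : ι → Set (MvPolynomial (Fin n) A × MvPolynomial (Fin n) A)),
      ∃ T', (⋂ i, Zset A ρ (T i)) = Zset A ρ T') ∧
    ((∃ T : Set (MvPolynomial (Fin n) A × MvPolynomial (Fin n) A),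
      Zset A ρ T = (∅ : Set (Fin n → B))) ∧
     (∃ T : Set (MvPolynomial (Fin n) A × MvPolynomial (Fin n) A),
      Zset A ρ T = (Set.univ : Set (Fin n → B)))) ∧
    (∃ t : TopologicalSpace (Fin n → B),
      ∀ s : Set (Fin n → B), @IsClosed _ t s ↔
        ∃ T : Set (MvPolynomial (Fin n) A × MvPolynomial (Fin n) A), s = Zset A ρ T) := by
  obtain ⟨hrefl, hsymm, htrans, hadd, hmul⟩ := hρ
  -- tmul on B × B is in ρ as soon as one factor is
  have tmul_comm : ∀ p q : B × B, tmul p q = tmul q p := by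
    intro p q
    simp only [tmul, Prod.mk.injEq]
    constructor <;> ring
  have htm : ∀ p q : B × B, p ∈ ρ → tmul p q ∈ ρ := by
    rintro ⟨a, b⟩ ⟨c, d⟩ h
    have h1 : (a * c, b * c) ∈ ρ := hmul _ _ _ _ h (hrefl c)
    have h2 : (b * d, a * d) ∈ ρ := hmul _ _ _ _ (hsymm _ _ h) (hrefl d)
    have h3 := hadd _ _ _ _ h1 h2
    simpa [tmul, add_comm] using h3
  have htm' : ∀ p q : B × B, q ∈ ρ → tmul p q ∈ ρ := by
    intro p q h; rw [tmul_comm]; exact htm q p h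
  -- evaluation sends tmul to tmul
  have ev : ∀ (P : Fin n → B) (p q : MvPolynomial (Fin n) A × MvPolynomial (Fin n) A),
      (evalAt A P (tmul p q).1, evalAt A P (tmul p q).2)
        = tmul (evalAt A P p.1, evalAt A P p.2) (evalAt A P q.1, evalAt A P q.2) := by
    intro P p q
    simp [tmul, evalAt, MvPolynomial.eval₂_add, MvPolynomial.eval₂_mul]
  -- (1,0) is not in ρ (properness)
  have h10 : ((1 : B), (0 : B)) ∉ ρ := by
    intro h
    apply hproper
    ext ⟨a, b⟩
    simp only [Set.mem_univ, iff_true]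
    have ha : (a, (0 : B)) ∈ ρ := by
      have := hmul _ _ _ _ (hrefl a) h
      simpa using this
    have hb : (b, (0 : B)) ∈ ρ := by
      have := hmul _ _ _ _ (hrefl b) h
      simpa using this
    exact htrans _ _ _ ha (hsymm _ _ hb)
  -- part 1
  have part1 : ∀ T₁ T₂ : Set (MvPolynomial (Fin n) A × MvPolynomial (Fin n) A),
      Zset A ρ T₁ ∪ Zset A ρ T₂ =
        Zset A ρ {r | ∃ p ∈ T₁, ∃ q ∈ T₂, r = tmul p q} := by
    intro T₁ T₂
    ext P
    simp only [Set.mem_union, Zset, Set.mem_setOf_eq]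
    constructor
    · rintro (h | h) r ⟨p, hp, q, hq, rfl⟩
      · rw [ev]; exact htm _ _ (h p hp)
      · rw [ev]; exact htm' _ _ (h q hq)
    · intro h
      by_cases h1 : ∀ p ∈ T₁, (evalAt A P p.1, evalAt A P p.2) ∈ ρ
      · exact Or.inl h1
      · push_neg at h1
        obtain ⟨p, hp, hnp⟩ := h1
        refine Or.inr fun q hq => ?_
        have := h (tmul p q) ⟨p, hp, q, hq, rfl⟩
        rw [ev] at this
        rcases hprime _ _ this with h' | h'
        · exact absurd h' hnp
        · exact h'
  -- Zset of a union is the intersection of Zsets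
  have zEmpty : Zset A ρ {((1 : MvPolynomial (Fin n) A), (0 : MvPolynomial (Fin n) A))}
      = (∅ : Set (Fin n → B)) := by
    ext P
    simp only [Zset, Set.mem_setOf_eq, Set.mem_singleton_iff, Set.mem_empty_iff_false,
      iff_false]
    intro h
    have := h ((1 : MvPolynomial (Fin n) A), (0 : MvPolynomial (Fin n) A)) rfl
    simp only [evalAt, MvPolynomial.eval₂_one, MvPolynomial.eval₂_zero] at this
    exact h10 this
  have zUniv : Zset A ρ (∅ : Set (MvPolynomial (Fin n) A × MvPolynomial (Fin n) A))
      = (Set.univ : Set (Fin n → B)) := by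
    ext P; simp [Zset]
  refine ⟨part1, fun ι T => ⟨⋃ i, T i, zUnion_aux A ρ T⟩, ⟨⟨_, zEmpty⟩, ⟨_, zUniv⟩⟩, ?_⟩
  -- the topology
  set C : Set (Set (Fin n → B)) :=
    {s | ∃ T : Set (MvPolynomial (Fin n) A × MvPolynomial (Fin n) A), s = Zset A ρ T}
    with hC
  have empty_mem : (∅ : Set (Fin n → B)) ∈ C := ⟨_, zEmpty.symm⟩
  have sInter_mem : ∀ S : Set (Set (Fin n → B)), S ⊆ C → ⋂₀ S ∈ C := by
    intro S hS
    have hT : ∀ s : S, ∃ T, (s : Set (Fin n → B)) = Zset A ρ T := fun s => hS s.2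
    choose T hTs using hT
    refine ⟨⋃ s : S, T s, ?_⟩
    rw [← zUnion_aux]
    ext P
    simp only [Set.mem_sInter, Set.mem_iInter]
    constructor
    · intro h s; rw [← hTs s]; exact h s s.2
    · intro h s hs; have := h ⟨s, hs⟩; rwa [← hTs ⟨s, hs⟩] at this
  have union_mem : ∀ s ∈ C, ∀ t ∈ C, s ∪ t ∈ C := by
    rintro s ⟨T₁, rfl⟩ t ⟨T₂, rfl⟩
    exact ⟨_, part1 T₁ T₂⟩
  refine ⟨TopologicalSpace.ofClosed C empty_mem sInter_mem union_mem, fun s => ?_⟩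
  have hopen : ∀ u : Set (Fin n → B),
      @IsOpen _ (TopologicalSpace.ofClosed C empty_mem sInter_mem union_mem) u ↔ uᶜ ∈ C :=
    fun u => Iff.rfl
  rw [← @isOpen_compl_iff _ _ (TopologicalSpace.ofClosed C empty_mem sInter_mem union_mem),
    hopen, compl_compl]
  exact Iff.rfl
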